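/- Let N₁, …, N_n ∈ End(H) be pairwise commuting nilpotent endomorphisms, and let G : ℂⁿ → End(H) be analytic on Dⁿ with G(0) = id and with the property that for every j ∈ {1,…,n} and every s ∈ Dⁿ with s_j = 0 one has N_j ∘ G(s) = G(s) ∘ N_j. Then there exist a constant C > 0 and a natural number m such that for every y ∈ ℝⁿ with y₁ ≥ y₂ ≥ ⋯ ≥ y_n ≥ 1, every s ∈ Dⁿ with |s_j| = e^{−2π y_j} for all j, and every integer k ≥ 1: ‖(ad(y₁N₁ + ⋯ + y_nN_n))^k (G(s))‖ ≤ C · Σ_{j=1}^n y_j^m e^{−2π y_j}. -/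

import Mathlib

open Real

open Metric

lemma aux_schwarz {E : Type*} [NormedAddCommGroup E] [NormedSpace ℂ E] [CompleteSpace E]
    {n : ℕ} (F : (Fin n → ℂ) → E)
    (hF : AnalyticOnNhd ℂ F {s : Fin n → ℂ | ∀ j, ‖s j‖ < 1})
    (j0 : Fin n)
    (hvan : ∀ s : Fin n → ℂ, (∀ j, ‖s j‖ < 1) → s j0 = 0 → F s = 0) :
    ∃ C : ℝ, 0 < C ∧ ∀ s : Fin n → ℂ, (∀ i, ‖s i‖ ≤ 1/2) → ‖F s‖ ≤ C * ‖s j0‖ := by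
  have hsub : closedBall (0 : Fin n → ℂ) (3/4) ⊆ {s : Fin n → ℂ | ∀ j, ‖s j‖ < 1} := by
    intro s hs j
    have h1 : ‖s‖ ≤ 3/4 := by simpa [dist_eq_norm] using hs
    have := norm_le_pi_norm s j
    linarith
  have hcont : ContinuousOn F (closedBall (0 : Fin n → ℂ) (3/4)) := fun s hs =>
    ((hF s (hsub hs)).continuousAt).continuousWithinAt
  obtain ⟨M, hM⟩ := (isCompact_closedBall (0 : Fin n → ℂ) (3/4)).exists_bound_of_continuousOn hcont
  have hM0 : 0 ≤ M := le_trans (norm_nonneg _) (hM 0 (mem_closedBall_self (by norm_num)))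
  refine ⟨2 * (M + 1), by linarith, ?_⟩
  intro s hs
  set h : ℂ → E := fun z => F (Function.update s j0 z) with hh
  have hmem : ∀ z : ℂ, ‖z‖ < 1 → ∀ j, ‖Function.update s j0 z j‖ < 1 := by
    intro z hz j
    rcases eq_or_ne j j0 with rfl | hne
    · simpa using hz
    · rw [Function.update_of_ne hne]; linarith [hs j]
  have hball : ∀ z : ℂ, z ∈ ball (0:ℂ) (3/4) → Function.update s j0 z ∈ closedBall (0 : Fin n → ℂ) (3/4) := by
    intro z hz
    rw [mem_closedBall, dist_zero_right]
    rw [pi_norm_le_iff_of_nonneg (by norm_num)]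
    intro j
    rcases eq_or_ne j j0 with rfl | hne
    · simpa using le_of_lt (by simpa [dist_zero_right] using hz : ‖z‖ < 3/4)
    · rw [Function.update_of_ne hne]; linarith [hs j]
  have hd : DifferentiableOn ℂ h (ball (0:ℂ) (3/4)) := by
    intro z hz
    apply DifferentiableAt.differentiableWithinAt
    have h1 : (fun z : ℂ => Function.update s j0 z) =
        fun z : ℂ => Function.update s j0 0 + z • (Pi.single j0 1 : Fin n → ℂ) := by
      funext z i
      rcases eq_or_ne i j0 with rfl | hne
      · simp
      · simp [Function.update_of_ne hne, Pi.single_eq_of_ne hne]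
    have h2 : DifferentiableAt ℂ (fun z : ℂ => Function.update s j0 z) z := by
      rw [h1]
      exact (differentiableAt_const _).add ((differentiableAt_id).smul_const _)
    have h3 : DifferentiableAt ℂ F (Function.update s j0 z) := by
      have hz' : ‖z‖ < 3/4 := by simpa [dist_zero_right] using hz
      exact (hF _ (hmem z (by linarith) )).differentiableAt
    exact h3.comp z h2
  have h0 : h 0 = 0 := by
    apply hvan _ (hmem 0 (by norm_num))
    simp
  have hmaps : Set.MapsTo h (ball (0:ℂ) (3/4)) (ball (h 0) (M + 1)) := by
    intro z hz
    rw [mem_ball, h0, dist_zero_right]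
    exact lt_of_le_of_lt (hM _ (hball z hz)) (by linarith)
  have hz0 : s j0 ∈ ball (0:ℂ) (3/4) := by
    rw [mem_ball, dist_zero_right]; linarith [hs j0]
  have := Complex.dist_le_div_mul_dist_of_mapsTo_ball hd (hmaps.mono_right ball_subset_closedBall) hz0
  rw [h0] at this
  have hfs : h (s j0) = F s := by rw [hh]; simp [Function.update_eq_self]
  rw [hfs, dist_zero_right, dist_zero_right] at this
  calc ‖F s‖ ≤ (M+1)/(3/4) * ‖s j0‖ := this
    _ ≤ 2 * (M + 1) * ‖s j0‖ := by
        apply mul_le_mul_of_nonneg_right _ (norm_nonneg _)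
        rw [div_le_iff₀ (by norm_num)]
        nlinarith

lemma aux_expand {M : Type*} [AddCommGroup M] [Module ℂ M] {n : ℕ}
    (g : Fin n → Module.End ℂ M) (c : Fin n → ℂ) (k : ℕ) (B : M) :
    (fun x => ∑ j, c j • g j x)^[k] B
      = ∑ w : Fin k → Fin n, (∏ i, c (w i)) • ((List.ofFn w).map g).prod B := by
  induction k generalizing B with
  | zero => simp [List.ofFn_zero]
  | succ k ih =>
    rw [Function.iterate_succ_apply', ih]
    rw [← Equiv.sum_comp (Fin.consEquiv (fun _ => Fin n)), Fintype.sum_prod_type]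
    simp only [map_sum, map_smul, Finset.smul_sum]
    refine Finset.sum_congr rfl fun j _ => Finset.sum_congr rfl fun w _ => ?_
    have h1 : (Fin.consEquiv (fun _ => Fin n)) (j, w) = Fin.cons j w := rfl
    rw [h1]
    have h2 : List.ofFn (Fin.cons j w : Fin (k+1) → Fin n) = j :: List.ofFn w := by
      rw [List.ofFn_succ]
      simp [Fin.cons_zero, Fin.cons_succ]
    rw [h2, Fin.prod_univ_succ]
    simp only [Fin.cons_zero, Fin.cons_succ, List.map_cons, List.prod_cons]
    rw [smul_smul, Module.End.mul_apply]

lemma aux_pull {R : Type*} [Monoid R] {n : ℕ} (g : Fin n → R)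
    (hgc : ∀ i j, Commute (g i) (g j)) (j : Fin n) :
    ∀ l : List (Fin n), (l.map g).prod
      = ((l.filter (fun a => a ≠ j)).map g).prod * g j ^ (l.count j) := by
  intro l
  induction l with
  | nil => simp
  | cons a t ih =>
    have hcP : Commute (g j) (((t.filter (fun a => a ≠ j)).map g).prod) := by
      apply Commute.list_prod_right
      intro x hx
      obtain ⟨i, _, rfl⟩ := List.mem_map.1 hx
      exact hgc j i
    by_cases h : a = j
    · subst h
      rw [List.map_cons, List.prod_cons, ih]
      rw [List.count_cons_self, List.filter_cons_of_neg (by simp)]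
      have hc2 : Commute (g a) (((t.filter (fun x => x ≠ a)).map g).prod * g a ^ t.count a) :=
        hcP.mul_right ((Commute.refl (g a)).pow_right _)
      rw [hc2.eq, mul_assoc, ← pow_succ]
    · rw [List.map_cons, List.prod_cons, ih, List.count_cons_of_ne h,
        List.filter_cons_of_pos (by simp [h]), List.map_cons, List.prod_cons, mul_assoc]

lemma aux_len {n : ℕ} (l : List (Fin n)) : ∑ j, l.count j = l.length := by
  induction l with
  | nil => simp
  | cons a t ih =>
    simp only [List.count_cons, List.length_cons, ← ih, Finset.sum_add_distrib]
    simp [Finset.sum_ite_eq]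

open Real

set_option maxHeartbeats 1000000 in
/-- If `N₁, …, N_n` are pairwise commuting nilpotent operators and
`G : ℂⁿ → End(H)` is analytic on the unit polydisc with `G(0) = id` and `[N_j, G(s)] = 0`
whenever `s_j = 0`, then `‖(ad(y₁N₁ + ⋯ + y_nN_n))^k G(s)‖ ≤ C · Σ_j y_j^m e^{-2πy_j}`
for `y₁ ≥ ⋯ ≥ y_n ≥ 1`, `|s_j| = e^{-2πy_j}`, `k ≥ 1`. -/
theorem stmt9 {H : Type*} [NormedAddCommGroup H] [NormedSpace ℂ H] [FiniteDimensional ℂ H]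
    (n : ℕ) (N : Fin n → (H →L[ℂ] H))
    (hnil : ∀ j, IsNilpotent (N j))
    (hcomm : ∀ i j, N i * N j = N j * N i)
    (G : (Fin n → ℂ) → (H →L[ℂ] H))
    (hG : AnalyticOnNhd ℂ G {s : Fin n → ℂ | ∀ j, ‖s j‖ < 1})
    (hG0 : G 0 = 1)
    (hGcomm : ∀ (j : Fin n) (s : Fin n → ℂ), (∀ i, ‖s i‖ < 1) → s j = 0 →
      N j * G s = G s * N j) :
    ∃ C : ℝ, 0 < C ∧ ∃ m : ℕ,
      ∀ y : Fin n → ℝ,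
        (∀ i j : Fin n, i ≤ j → y j ≤ y i) → (∀ j, 1 ≤ y j) →
        ∀ s : Fin n → ℂ, (∀ j, ‖s j‖ = Real.exp (-(2 * π * y j))) →
        ∀ k : ℕ, 1 ≤ k →
          ‖(fun B : H →L[ℂ] H =>
              (∑ j, (y j : ℂ) • N j) * B - B * (∑ j, (y j : ℂ) • N j))^[k] (G s)‖ ≤
            C * ∑ j, y j ^ m * Real.exp (-(2 * π * y j)) := by
  classical
  set g : Fin n → Module.End ℂ (H →L[ℂ] H) :=
    fun j => LinearMap.mulLeft ℂ (N j) - LinearMap.mulRight ℂ (N j) with hgdef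
  have hgapp : ∀ j (B : H →L[ℂ] H), g j B = N j * B - B * N j := by
    intro j B
    simp [hgdef, LinearMap.sub_apply, LinearMap.mulLeft_apply, LinearMap.mulRight_apply]
  have hgc : ∀ i j, Commute (g i) (g j) := by
    intro i j
    have h1 : Commute (LinearMap.mulLeft ℂ (N i)) (LinearMap.mulLeft ℂ (N j)) := by
      show _ * _ = _ * _
      rw [Module.End.mul_eq_comp, Module.End.mul_eq_comp, ← LinearMap.mulLeft_mul,
        ← LinearMap.mulLeft_mul, hcomm i j]
    have h4 : Commute (LinearMap.mulRight ℂ (N i)) (LinearMap.mulRight ℂ (N j)) := by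
      show _ * _ = _ * _
      rw [Module.End.mul_eq_comp, Module.End.mul_eq_comp, ← LinearMap.mulRight_mul,
        ← LinearMap.mulRight_mul, hcomm i j]
    have h2 : Commute (LinearMap.mulLeft ℂ (N i)) (LinearMap.mulRight ℂ (N j)) :=
      LinearMap.commute_mulLeft_right _ _
    have h3 : Commute (LinearMap.mulRight ℂ (N i)) (LinearMap.mulLeft ℂ (N j)) :=
      (LinearMap.commute_mulLeft_right _ _).symm
    exact (h1.sub_right h2).sub_left (h3.sub_right h4)
  have hgnil : ∀ j, ∃ m, g j ^ m = 0 := by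
    intro j
    obtain ⟨dj, hdj⟩ := hnil j
    have h1 : IsNilpotent (LinearMap.mulLeft ℂ (N j)) :=
      ⟨dj, by rw [LinearMap.pow_mulLeft, hdj, LinearMap.mulLeft_zero_eq_zero]⟩
    have h2 : IsNilpotent (LinearMap.mulRight ℂ (N j)) :=
      ⟨dj, by rw [LinearMap.pow_mulRight, hdj, LinearMap.mulRight_zero_eq_zero]⟩
    exact (LinearMap.commute_mulLeft_right _ _).isNilpotent_sub h1 h2
  choose d hd using hgnil
  have hkey : ∀ (k : ℕ) (w : Fin k → Fin n) (j0 : Fin n), ∃ C : ℝ, 0 < C ∧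
      ((∃ i, w i = j0) → ∀ s : Fin n → ℂ, (∀ i, ‖s i‖ ≤ 1/2) →
        ‖((List.ofFn w).map g).prod (G s)‖ ≤ C * ‖s j0‖) := by
    intro k w j0
    by_cases hmem : ∃ i, w i = j0
    · have hF : AnalyticOnNhd ℂ (fun s => ((List.ofFn w).map g).prod (G s))
          {s : Fin n → ℂ | ∀ j, ‖s j‖ < 1} := by
        have h := (LinearMap.toContinuousLinearMap
          (((List.ofFn w).map g).prod)).comp_analyticOnNhd hG
        simpa [Function.comp_def, LinearMap.coe_toContinuousLinearMap'] using h
      have hvan : ∀ s : Fin n → ℂ, (∀ j, ‖s j‖ < 1) → s j0 = 0 →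
          ((List.ofFn w).map g).prod (G s) = 0 := by
        intro s hsU hs0
        have hcnt : 0 < (List.ofFn w).count j0 := by
          rw [List.count_pos_iff, List.mem_ofFn]
          exact Set.mem_range.2 hmem
        have h1 : g j0 (G s) = 0 := by
          rw [hgapp, hGcomm j0 s hsU hs0, sub_self]
        rw [aux_pull g hgc j0 (List.ofFn w)]
        obtain ⟨c, hc⟩ : ∃ c, (List.ofFn w).count j0 = c + 1 :=
          ⟨_, (Nat.succ_pred_eq_of_pos hcnt).symm⟩
        rw [hc, pow_succ, ← mul_assoc, Module.End.mul_apply, h1, map_zero]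
      obtain ⟨C, hC, hb⟩ := aux_schwarz _ hF j0 hvan
      exact ⟨C, hC, fun _ => hb⟩
    · exact ⟨1, one_pos, fun h => absurd h hmem⟩
  choose Cf hCfpos hCf using hkey
  set K := ∑ j, d j with hK
  set S1 : ℝ := ∑ k' ∈ Finset.range K, ∑ w : Fin k' → Fin n, ∑ j0, Cf k' w j0 with hS1
  have hS1nonneg : 0 ≤ S1 := Finset.sum_nonneg fun k' _ => Finset.sum_nonneg fun w _ =>
    Finset.sum_nonneg fun j0 _ => (hCfpos k' w j0).le
  refine ⟨1 + S1, by linarith, K, ?_⟩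
  intro y hdec hy1 s hs k hk
  have hy0 : ∀ j, (0:ℝ) ≤ y j := fun j => le_trans zero_le_one (hy1 j)
  have hSnn : 0 ≤ ∑ j, y j ^ K * Real.exp (-(2 * π * y j)) :=
    Finset.sum_nonneg fun j _ => mul_nonneg (pow_nonneg (hy0 j) _) (Real.exp_pos _).le
  have hfn : (fun B : H →L[ℂ] H =>
      (∑ j, (y j : ℂ) • N j) * B - B * (∑ j, (y j : ℂ) • N j)) =
      fun B => ∑ j, (y j : ℂ) • g j B := by
    funext B
    simp only [hgapp, smul_sub, Finset.sum_sub_distrib, Finset.sum_mul, Finset.mul_sum,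
      smul_mul_assoc, mul_smul_comm]
  have hexp := aux_expand g (fun j => ((y j : ℝ) : ℂ)) k (G s)
  rw [hfn, hexp]
  rcases le_or_gt K k with hKk | hkK
  · have hzero : ∀ w : Fin k → Fin n,
        (∏ i, ((y (w i) : ℝ) : ℂ)) • ((List.ofFn w).map g).prod (G s) = 0 := by
      intro w
      have hjex : ∃ j, d j ≤ (List.ofFn w).count j := by
        by_contra hcon
        push_neg at hcon
        have h2 : (∑ j, (List.ofFn w).count j) + n ≤ K := by
          rw [hK]
          calc (∑ j, (List.ofFn w).count j) + n
              = ∑ j, ((List.ofFn w).count j + 1) := by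
                rw [Finset.sum_add_distrib]; simp
            _ ≤ ∑ j, d j := Finset.sum_le_sum fun j _ => hcon j
        rw [aux_len, List.length_ofFn] at h2
        have hn0 : n = 0 := by omega
        exact Fin.elim0 (hn0 ▸ w ⟨0, by omega⟩)
      obtain ⟨j, hj⟩ := hjex
      have hgj : g j ^ (List.ofFn w).count j = 0 := by
        rw [show (List.ofFn w).count j = d j + ((List.ofFn w).count j - d j) by omega,
          pow_add, hd j, zero_mul]
      rw [aux_pull g hgc j, hgj, mul_zero, LinearMap.zero_apply, smul_zero]
    rw [Finset.sum_eq_zero fun w _ => hzero w, norm_zero]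
    exact mul_nonneg (by linarith) hSnn
  · have hk0 : 0 < k := hk
    set jf : (Fin k → Fin n) → Fin n := fun w =>
      (Finset.univ.image w).min' ⟨w ⟨0, hk0⟩, Finset.mem_image_of_mem w (Finset.mem_univ _)⟩
      with hjf
    have hs12 : ∀ i, ‖s i‖ ≤ 1/2 := by
      intro i
      rw [hs i]
      have h2 : (2:ℝ) ≤ Real.exp (2 * π) := by
        have h3 := Real.add_one_le_exp (2 * π)
        have h4 := Real.pi_gt_three
        linarith
      calc Real.exp (-(2 * π * y i)) ≤ Real.exp (-(2 * π)) := by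
            rw [Real.exp_le_exp]
            have := hy1 i
            nlinarith [Real.pi_pos]
        _ = (Real.exp (2 * π))⁻¹ := by rw [← Real.exp_neg]
        _ ≤ 2⁻¹ := inv_anti₀ two_pos h2
        _ = 1/2 := by norm_num
    have hterm : ∀ w : Fin k → Fin n,
        ‖(∏ i, ((y (w i) : ℝ) : ℂ)) • ((List.ofFn w).map g).prod (G s)‖ ≤
          Cf k w (jf w) * ∑ j, y j ^ K * Real.exp (-(2 * π * y j)) := by
      intro w
      have hjmem : jf w ∈ Finset.univ.image w := Finset.min'_mem _ _
      obtain ⟨i0, _, hi0⟩ := Finset.mem_image.1 hjmem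
      have hble := hCf k w (jf w) ⟨i0, hi0⟩ s hs12
      set X := ((List.ofFn w).map g).prod (G s) with hX
      have hnorm : ‖(∏ i, ((y (w i) : ℝ) : ℂ))‖ = ∏ i, y (w i) := by
        rw [show (∏ i, ((y (w i) : ℝ) : ℂ)) = (((∏ i, y (w i) : ℝ)) : ℂ) by push_cast; rfl,
          Complex.norm_real, Real.norm_eq_abs,
          abs_of_nonneg (Finset.prod_nonneg fun i _ => hy0 _)]
      have hprodle : ∏ i, y (w i) ≤ y (jf w) ^ k := by
        calc ∏ i, y (w i) ≤ ∏ _i : Fin k, y (jf w) :=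
              Finset.prod_le_prod (fun i _ => hy0 _) (fun i _ => hdec (jf w) (w i)
                (Finset.min'_le _ _ (Finset.mem_image_of_mem w (Finset.mem_univ i))))
          _ = y (jf w) ^ k := by rw [Finset.prod_const, Finset.card_univ, Fintype.card_fin]
      have hCfe : (0:ℝ) ≤ Cf k w (jf w) * ‖s (jf w)‖ := le_trans (norm_nonneg _) hble
      calc ‖(∏ i, ((y (w i) : ℝ) : ℂ)) • X‖
          = ‖(∏ i, ((y (w i) : ℝ) : ℂ))‖ * ‖X‖ := norm_smul _ X
        _ = (∏ i, y (w i)) * ‖X‖ := by rw [hnorm]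
        _ ≤ (∏ i, y (w i)) * (Cf k w (jf w) * ‖s (jf w)‖) :=
            mul_le_mul_of_nonneg_left hble (Finset.prod_nonneg fun i _ => hy0 _)
        _ ≤ y (jf w) ^ k * (Cf k w (jf w) * ‖s (jf w)‖) :=
            mul_le_mul_of_nonneg_right hprodle hCfe
        _ ≤ y (jf w) ^ K * (Cf k w (jf w) * ‖s (jf w)‖) :=
            mul_le_mul_of_nonneg_right (pow_le_pow_right₀ (hy1 _) hkK.le) hCfe
        _ = Cf k w (jf w) * (y (jf w) ^ K * Real.exp (-(2 * π * y (jf w)))) := by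
            rw [hs (jf w)]; ring
        _ ≤ Cf k w (jf w) * ∑ j, y j ^ K * Real.exp (-(2 * π * y j)) := by
            apply mul_le_mul_of_nonneg_left _ (hCfpos k w (jf w)).le
            exact Finset.single_le_sum
              (f := fun j => y j ^ K * Real.exp (-(2 * π * y j)))
              (fun j _ => mul_nonneg (pow_nonneg (hy0 j) _) (Real.exp_pos _).le)
              (Finset.mem_univ _)
    calc ‖∑ w : Fin k → Fin n, (∏ i, ((y (w i) : ℝ) : ℂ)) • ((List.ofFn w).map g).prod (G s)‖
        ≤ ∑ w : Fin k → Fin n,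
            ‖(∏ i, ((y (w i) : ℝ) : ℂ)) • ((List.ofFn w).map g).prod (G s)‖ :=
          norm_sum_le _ _
      _ ≤ ∑ w : Fin k → Fin n, Cf k w (jf w) * ∑ j, y j ^ K * Real.exp (-(2 * π * y j)) :=
          Finset.sum_le_sum fun w _ => hterm w
      _ = (∑ w : Fin k → Fin n, Cf k w (jf w)) * ∑ j, y j ^ K * Real.exp (-(2 * π * y j)) := by
          rw [Finset.sum_mul]
      _ ≤ (1 + S1) * ∑ j, y j ^ K * Real.exp (-(2 * π * y j)) := by
          apply mul_le_mul_of_nonneg_right _ hSnn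
          have h7 : ∑ w : Fin k → Fin n, Cf k w (jf w) ≤
              ∑ w : Fin k → Fin n, ∑ j0, Cf k w j0 :=
            Finset.sum_le_sum fun w _ => Finset.single_le_sum
              (fun j0 _ => (hCfpos k w j0).le) (Finset.mem_univ _)
          have h8 : ∑ w : Fin k → Fin n, ∑ j0, Cf k w j0 ≤ S1 := by
            rw [hS1]
            exact Finset.single_le_sum
              (f := fun k' => ∑ w : Fin k' → Fin n, ∑ j0, Cf k' w j0)
              (fun k' _ => Finset.sum_nonneg fun w _ =>
                Finset.sum_nonneg fun j0 _ => (hCfpos k' w j0).le)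
              (Finset.mem_range.2 hkK)
          linarith
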